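/- arXiv:2205.13444 — 3 statements merged into one kernel-verified Lean document; each statement's English description precedes it below -/
import Mathlib

section
/- Let N be a natural number, V ∈ ℝ^N, ε > 0, and λ ≥ 0. Define the PKD step x*(V) ∈ ℝ^N coordinatewise by x*_i = ε if V_i < −λ, x*_i = −ε if V_i > λ, and x*_i = 0 if |V_i| ≤ λ. Then every coordinate of x*(V) lies in [−ε, ε], and for every x ∈ ℝ^N with all coordinates in [−ε, ε], V·x*(V) + λ·‖x*(V)‖₁ ≤ V·x + λ·‖x‖₁. -/
/-- The PKD step: `x*_i = ε` if `V_i < -λ`, `x*_i = -ε` if `V_i > λ`, and `x*_i = 0`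
if `|V_i| ≤ λ`. -/
noncomputable def pkdStep {N : ℕ} (lam eps : ℝ) (V : Fin N → ℝ) : Fin N → ℝ :=
  fun i => if V i < -lam then eps else if lam < V i then -eps else 0

/-- Theorem 2 of the paper: the PKD step is a global minimizer of the ℓ1-regularized
linear objective `V·x + λ‖x‖₁` over the box `[-ε, ε]^N`. -/
theorem pkdStep_is_minimizer {N : ℕ} (V : Fin N → ℝ) (eps lam : ℝ)
    (heps : 0 < eps) (hlam : 0 ≤ lam) :
    (∀ i, pkdStep lam eps V i ∈ Set.Icc (-eps) eps) ∧
    ∀ x : Fin N → ℝ, (∀ i, x i ∈ Set.Icc (-eps) eps) →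
      (∑ i, V i * pkdStep lam eps V i) + lam * ∑ i, |pkdStep lam eps V i| ≤
        (∑ i, V i * x i) + lam * ∑ i, |x i| := by
  constructor
  · intro i
    unfold pkdStep
    split_ifs <;> constructor <;> linarith
  · intro x hx
    have key : ∀ i, V i * pkdStep lam eps V i + lam * |pkdStep lam eps V i| ≤
        V i * x i + lam * |x i| := by
      intro i
      obtain ⟨h1, h2⟩ := hx i
      have habs : |x i| ≤ eps := abs_le.mpr ⟨h1, h2⟩
      have hxx : x i ≤ |x i| := le_abs_self _
      have hxx' : -|x i| ≤ x i := neg_abs_le _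
      have habs0 : 0 ≤ |x i| := abs_nonneg _
      unfold pkdStep
      split_ifs with hc1 hc2
      · -- V i < -lam, choose eps
        rw [abs_of_pos heps]
        nlinarith [mul_nonneg (by linarith : (0:ℝ) ≤ -(V i + lam)) (by linarith : (0:ℝ) ≤ eps - |x i|),
          mul_nonneg (by linarith : (0:ℝ) ≤ -V i) (by linarith : (0:ℝ) ≤ |x i| - x i)]
      · -- lam < V i, choose -eps
        rw [abs_neg, abs_of_pos heps]
        have hV : lam - V i < 0 := by linarith
        nlinarith
      · simp only [abs_zero, mul_zero, add_zero]
        have hVabs : |V i| ≤ lam := abs_le.mpr ⟨by linarith, by linarith⟩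
        nlinarith [neg_abs_le (V i * x i), abs_mul (V i) (x i),
          mul_le_mul_of_nonneg_right hVabs habs0]
    calc (∑ i, V i * pkdStep lam eps V i) + lam * ∑ i, |pkdStep lam eps V i|
        = ∑ i, (V i * pkdStep lam eps V i + lam * |pkdStep lam eps V i|) := by
          rw [Finset.sum_add_distrib, Finset.mul_sum]
      _ ≤ ∑ i, (V i * x i + lam * |x i|) := Finset.sum_le_sum fun i _ => key i
      _ = (∑ i, V i * x i) + lam * ∑ i, |x i| := by
          rw [Finset.sum_add_distrib, Finset.mul_sum]
end

section
/- Let N be a natural number, g ∈ ℝ^N with ‖g‖∞ > λ for some λ > 0, ε > 0, and K a positive natural number. Let H : ℝ^N → ℝ be the affine function H(θ) = g·θ + c for some c ∈ ℝ, define the PKD step x*(g) ∈ ℝ^N coordinatewise by x*_i = ε if g_i < −λ, x*_i = −ε if g_i > λ, and x*_i = 0 if |g_i| ≤ λ, and set θ^k = θ^0 + k·x*(g) for k = 0, …, K. Then H(θ^0) − H(θ^K) ≥ K·λ·ε > 0. -/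
lemma pkdStep_mul_nonpos {N : ℕ} (lam eps : ℝ) (hlam : 0 < lam) (heps : 0 < eps)
    (V : Fin N → ℝ) (i : Fin N) : V i * pkdStep lam eps V i ≤ 0 := by
  unfold pkdStep
  split_ifs with h1 h2
  · nlinarith
  · nlinarith
  · simp

lemma pkdStep_mul_le {N : ℕ} (lam eps : ℝ) (hlam : 0 < lam) (heps : 0 < eps)
    (V : Fin N → ℝ) (i : Fin N) (hi : lam < |V i|) :
    V i * pkdStep lam eps V i ≤ -(lam * eps) := by
  unfold pkdStep
  rcases abs_cases (V i) with ⟨h, _⟩ | ⟨h, _⟩ <;> rw [h] at hi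
  · rw [if_neg (by linarith), if_pos hi]
    nlinarith
  · rw [if_pos (by linarith)]
    nlinarith

/-- Multi-step descent guarantee of Theorem 3 in the affine case: if `H(θ) = g·θ + c`
with `‖g‖∞ > λ > 0`, then `K` PKD iterations decrease `H` by at least `K·λ·ε > 0`. -/
theorem pkd_multistep_descent {N : ℕ} (g : Fin N → ℝ) (lam eps c : ℝ)
    (hlam : 0 < lam) (heps : 0 < eps) (hg : ∃ i, lam < |g i|)
    (K : ℕ) (hK : 0 < K)
    (H : (Fin N → ℝ) → ℝ) (hH : ∀ θ, H θ = (∑ i, g i * θ i) + c)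
    (θ₀ : Fin N → ℝ) :
    H θ₀ - H (θ₀ + (K : ℝ) • pkdStep lam eps g) ≥ (K : ℝ) * lam * eps ∧
    (0 : ℝ) < (K : ℝ) * lam * eps := by
  have hKpos : (0 : ℝ) < K := by exact_mod_cast hK
  constructor
  · obtain ⟨i₀, hi₀⟩ := hg
    have hsum : ∑ i, g i * pkdStep lam eps g i ≤ -(lam * eps) := by
      calc ∑ i, g i * pkdStep lam eps g i
          ≤ ∑ i, (if i = i₀ then -(lam * eps) else 0) := by
            apply Finset.sum_le_sum
            intro i _
            by_cases h : i = i₀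
            · simp only [h, if_pos rfl]
              exact pkdStep_mul_le lam eps hlam heps g i₀ hi₀
            · simp only [if_neg h]
              exact pkdStep_mul_nonpos lam eps hlam heps g i
        _ = -(lam * eps) := by simp
    rw [hH, hH]
    have : ∑ i, g i * (θ₀ + (K : ℝ) • pkdStep lam eps g) i
        = ∑ i, g i * θ₀ i + (K : ℝ) * ∑ i, g i * pkdStep lam eps g i := by
      rw [Finset.mul_sum, ← Finset.sum_add_distrib]
      apply Finset.sum_congr rfl
      intro i _
      simp [Pi.add_apply, Pi.smul_apply, smul_eq_mul]
      ring
    rw [this]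
    nlinarith
  · positivity
end

section
/- Let N be a natural number, g ∈ ℝ^N with ‖g‖∞ > λ for some λ > 0, ε > 0, L > 0, and K a positive natural number. Let H : ℝ^N → ℝ be the affine function H(θ) = g·θ + c, define the PKD step x*(g) ∈ ℝ^N coordinatewise by x*_i = ε if g_i < −λ, x*_i = −ε if g_i > λ, and x*_i = 0 if |g_i| ≤ λ, and set θ^k = θ^0 + k·x*(g) for k = 0, …, K. Let f : ℝ^N → ℝ be differentiable with ‖∇f(θ)‖∞ ≤ L for every θ with ‖θ − θ^0‖∞ ≤ K·ε. Set Δ = H(θ^0) − H(θ^K) and δ = |f(θ^K) − f(θ^0)|. Then Δ > 0 and Δ ≥ (λ/L)·δ. -/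
lemma fderiv_apply_sum {N : ℕ} (f : (Fin N → ℝ) → ℝ) (θ v : Fin N → ℝ) :
    fderiv ℝ f θ v = ∑ i, v i * fderiv ℝ f θ (Pi.single i 1) := by
  have hv : v = ∑ i, v i • (Pi.single i (1 : ℝ) : Fin N → ℝ) := by
    funext j
    simp [Pi.single_apply]
  conv_lhs => rw [hv]
  rw [map_sum]
  simp [smul_eq_mul]

/-- Exact instance of Theorem 3: with affine objective `H(θ) = g·θ + c`, `‖g‖∞ > λ > 0`,
and remaining knowledge `f` with gradient ℓ∞-bounded by `L` on the ℓ∞-ball of radius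
`K·ε` around `θ⁰`, the descent `Δ = H(θ⁰) - H(θ^K)` of `K` PKD iterations satisfies
`Δ > 0` and `Δ ≥ (λ/L)·δ` where `δ = |f(θ^K) - f(θ⁰)|`. -/
theorem pkd_principal_ratio_theorem {N : ℕ} (g : Fin N → ℝ) (lam eps c L : ℝ)
    (hlam : 0 < lam) (heps : 0 < eps) (hL : 0 < L) (hg : ∃ i, lam < |g i|)
    (K : ℕ) (hK : 0 < K)
    (H : (Fin N → ℝ) → ℝ) (hH : ∀ θ, H θ = (∑ i, g i * θ i) + c)
    (θ₀ : Fin N → ℝ)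
    (f : (Fin N → ℝ) → ℝ) (hf : Differentiable ℝ f)
    (hgrad : ∀ θ : Fin N → ℝ, (∀ i, |θ i - θ₀ i| ≤ (K : ℝ) * eps) →
      ∀ i, |fderiv ℝ f θ (Pi.single i 1)| ≤ L) :
    0 < H θ₀ - H (θ₀ + (K : ℝ) • pkdStep lam eps g) ∧
    H θ₀ - H (θ₀ + (K : ℝ) • pkdStep lam eps g) ≥
      (lam / L) * |f (θ₀ + (K : ℝ) • pkdStep lam eps g) - f θ₀| := by
  set x := pkdStep lam eps g with hx
  set v : Fin N → ℝ := (K : ℝ) • x with hv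
  have hKpos : (0 : ℝ) < K := by exact_mod_cast hK
  -- |x i| ≤ eps
  have hxle : ∀ i, |x i| ≤ eps := by
    intro i
    simp only [hx, pkdStep]
    split_ifs <;> simp [abs_of_pos heps, abs_of_nonneg, heps.le]
  -- key coordinatewise bound
  have hkey : ∀ i, lam * |x i| ≤ -(g i * x i) := by
    intro i
    simp only [hx, pkdStep]
    split_ifs with h1 h2
    · rw [abs_of_pos heps]; nlinarith
    · rw [abs_of_neg (neg_neg_iff_pos.mpr heps)]; nlinarith
    · simp
  have hnonneg : ∀ i, 0 ≤ -(g i * x i) := fun i =>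
    le_trans (by positivity) (hkey i)
  -- Δ computation
  have hΔ : H θ₀ - H (θ₀ + v) = (K : ℝ) * ∑ i, -(g i * x i) := by
    rw [hH, hH, Finset.mul_sum]
    simp only [Pi.add_apply, Pi.smul_apply, smul_eq_mul, hv]
    rw [show (∑ i, g i * θ₀ i) + c - ((∑ i, g i * (θ₀ i + (K:ℝ) * x i)) + c)
        = ∑ i, (g i * θ₀ i - g i * (θ₀ i + (K:ℝ) * x i)) from by
      rw [Finset.sum_sub_distrib]; ring]
    exact Finset.sum_congr rfl fun i _ => by ring
  set S := ∑ i, |x i| with hS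
  have hΔge : H θ₀ - H (θ₀ + v) ≥ (K : ℝ) * (lam * S) := by
    rw [hΔ]
    apply mul_le_mul_of_nonneg_left _ hKpos.le
    rw [hS, Finset.mul_sum]
    exact Finset.sum_le_sum fun i _ => hkey i
  -- positivity
  obtain ⟨i0, hi0⟩ := hg
  have hpos0 : 0 < -(g i0 * x i0) := by
    have := hkey i0
    have hxne : x i0 ≠ 0 := by
      simp only [hx, pkdStep]
      rcases lt_or_ge (g i0) 0 with h | h
      · have : g i0 < -lam := by rw [abs_of_neg h] at hi0; linarith
        simp [this, heps.ne']
      · have h2 : lam < g i0 := by rw [abs_of_nonneg h] at hi0; linarith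
        have h3 : ¬ g i0 < -lam := by linarith
        simp [h3, h2, heps.ne']
    have : 0 < lam * |x i0| := by positivity
    linarith [hkey i0]
  have hΔpos : 0 < H θ₀ - H (θ₀ + v) := by
    rw [hΔ]
    apply mul_pos hKpos
    exact Finset.sum_pos' (fun i _ => hnonneg i) ⟨i0, Finset.mem_univ i0, hpos0⟩
  refine ⟨hΔpos, ?_⟩
  -- mean value bound: |f(θ₀+v) - f θ₀| ≤ L * (K * S)
  have hδ : |f (θ₀ + v) - f θ₀| ≤ L * ((K : ℝ) * S) := by
    set φ : ℝ → ℝ := fun t => f (θ₀ + t • v) with hφ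
    have hderiv : ∀ t ∈ Set.Icc (0:ℝ) 1,
        HasDerivWithinAt φ (fderiv ℝ f (θ₀ + t • v) v) (Set.Icc 0 1) t := by
      intro t _
      have hγ : HasDerivAt (fun t : ℝ => θ₀ + t • v) v t := by
        simpa using ((hasDerivAt_id t).smul_const v).const_add θ₀
      exact ((hf (θ₀ + t • v)).hasFDerivAt.comp_hasDerivAt t hγ).hasDerivWithinAt
    have hbound : ∀ t ∈ Set.Ico (0:ℝ) 1,
        ‖fderiv ℝ f (θ₀ + t • v) v‖ ≤ L * ((K : ℝ) * S) := by
      intro t ht'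
      have ht : t ∈ Set.Icc (0:ℝ) 1 := ⟨ht'.1, ht'.2.le⟩
      have hmem : ∀ i, |(θ₀ + t • v) i - θ₀ i| ≤ (K : ℝ) * eps := by
        intro i
        simp only [Pi.add_apply, Pi.smul_apply, smul_eq_mul, hv, add_sub_cancel_left]
        rw [abs_mul, abs_mul]
        rw [abs_of_nonneg ht.1, Nat.abs_cast]
        calc t * ((K : ℝ) * |x i|) ≤ 1 * ((K : ℝ) * eps) := by
              apply mul_le_mul ht.2 (by
                apply mul_le_mul_of_nonneg_left (hxle i) hKpos.le) (by positivity) (by norm_num)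
          _ = (K : ℝ) * eps := by ring
      rw [fderiv_apply_sum f _ v, Real.norm_eq_abs]
      calc |∑ i, v i * fderiv ℝ f (θ₀ + t • v) (Pi.single i 1)|
          ≤ ∑ i, |v i * fderiv ℝ f (θ₀ + t • v) (Pi.single i 1)| :=
            Finset.abs_sum_le_sum_abs _ _
        _ ≤ ∑ i, (K : ℝ) * |x i| * L := by
            apply Finset.sum_le_sum
            intro i _
            rw [abs_mul]
            have h1 : |v i| = (K : ℝ) * |x i| := by
              simp [hv, abs_mul, Nat.abs_cast]
            rw [h1]
            exact mul_le_mul_of_nonneg_left (hgrad _ hmem i) (by positivity)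
        _ = L * ((K : ℝ) * S) := by
            rw [hS, Finset.mul_sum, Finset.mul_sum]
            apply Finset.sum_congr rfl
            intro i _
            ring
    have := norm_image_sub_le_of_norm_deriv_le_segment' hderiv hbound 1
      (Set.right_mem_Icc.mpr zero_le_one)
    simp only [hφ, one_smul, zero_smul, add_zero, Real.norm_eq_abs, sub_zero, mul_one] at this
    exact this
  -- combine
  calc (lam / L) * |f (θ₀ + v) - f θ₀| ≤ (lam / L) * (L * ((K : ℝ) * S)) := by
        apply mul_le_mul_of_nonneg_left hδ (by positivity)
    _ = (K : ℝ) * (lam * S) := by field_simp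
    _ ≤ H θ₀ - H (θ₀ + v) := hΔge
end
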